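/- Let K be a field and T : M_n(K) → M_n(K) a nonzero linear map preserving the L-relation. Then the kernel of T is a principal left ideal of M_n(K), i.e., ker(T) = M_n(K)·X for some matrix X. -/

import Mathlib

/-- The row space of a square matrix: the span of its rows. -/
def rowSpace {K : Type*} [Field K] {n : ℕ} (A : Matrix (Fin n) (Fin n) K) :
    Submodule K (Fin n → K) :=
  Submodule.span K (Set.range A)

section Aux

variable {K : Type*} [Field K] {n : ℕ}

lemma rowSpace_eq_bot {A : Matrix (Fin n) (Fin n) K} : rowSpace A = ⊥ ↔ A = 0 := by
  constructor
  · intro h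
    ext i j
    have hi : A i ∈ rowSpace A := Submodule.subset_span ⟨i, rfl⟩
    rw [h, Submodule.mem_bot] at hi
    simpa using congrFun hi j
  · rintro rfl
    rw [rowSpace, ← le_bot_iff, Submodule.span_le]
    rintro _ ⟨i, rfl⟩
    exact (Submodule.mem_bot K).mpr rfl

lemma rowSpace_mul_le (P B : Matrix (Fin n) (Fin n) K) : rowSpace (P * B) ≤ rowSpace B := by
  rw [rowSpace, Submodule.span_le]
  rintro _ ⟨i, rfl⟩
  have h : (P * B) i = ∑ k, P i k • B k := by
    ext j; simp [Matrix.mul_apply]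
  rw [h]
  exact Submodule.sum_mem _ fun k _ =>
    Submodule.smul_mem _ _ (Submodule.subset_span ⟨k, rfl⟩)

lemma rowSpace_unit_mul {P : Matrix (Fin n) (Fin n) K} (hP : IsUnit P)
    (B : Matrix (Fin n) (Fin n) K) : rowSpace (P * B) = rowSpace B := by
  refine le_antisymm (rowSpace_mul_le P B) ?_
  have hdet : IsUnit P.det := (Matrix.isUnit_iff_isUnit_det P).mp hP
  have hB : B = P⁻¹ * (P * B) := by rw [← Matrix.mul_assoc, Matrix.nonsing_inv_mul _ hdet, Matrix.one_mul]
  conv_lhs => rw [hB]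
  exact rowSpace_mul_le _ _

/-- The matrix with row `v` at position `p` and all other rows zero, as a linear map in `v`. -/
def rowMat (p : Fin n) : (Fin n → K) →ₗ[K] Matrix (Fin n) (Fin n) K where
  toFun v := Matrix.of fun a b => if a = p then v b else 0
  map_add' u v := by ext a b; by_cases h : a = p <;> simp [h]
  map_smul' c v := by ext a b; by_cases h : a = p <;> simp [h]

lemma rowMat_apply (p : Fin n) (v : Fin n → K) (a b : Fin n) :
    rowMat p v a b = if a = p then v b else 0 := rfl

lemma rowSpace_rowMat (p : Fin n) (v : Fin n → K) :
    rowSpace (rowMat p v) = Submodule.span K {v} := by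
  apply le_antisymm
  · rw [rowSpace, Submodule.span_le]
    rintro _ ⟨i, rfl⟩
    by_cases h : i = p
    · have : (rowMat p v : Matrix (Fin n) (Fin n) K) i = v := by
        ext b; simp [rowMat_apply, h]
      rw [this]
      exact Submodule.mem_span_singleton_self v
    · have : (rowMat p v : Matrix (Fin n) (Fin n) K) i = 0 := by
        ext b; simp [rowMat_apply, h]
      rw [this]; exact Submodule.zero_mem _
  · rw [Submodule.span_le, Set.singleton_subset_iff]
    refine Submodule.subset_span ⟨p, ?_⟩
    ext b; simp [rowMat_apply]

lemma stdBasisMatrix_mul_eq_rowMat (i k : Fin n) (B : Matrix (Fin n) (Fin n) K) :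
    Matrix.single i k (1 : K) * B = rowMat i (B k) := by
  ext a b
  simp only [Matrix.mul_apply, Matrix.single, Matrix.of_apply, rowMat_apply, ite_and,
    boole_mul]
  by_cases h : i = a
  · subst h
    simp
  · simp [h, Ne.symm h, fun m => (show ¬ (i = a) from h)]

end Aux

/-- The kernel of a nonzero linear `L`-preserver on `M_n(K)` is a principal
left ideal: `ker T = M_n(K) · X` for some matrix `X`. -/
theorem ker_L_preserver_principal_left_ideal
    {K : Type*} [Field K] {n : ℕ}
    (T : Matrix (Fin n) (Fin n) K →ₗ[K] Matrix (Fin n) (Fin n) K)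
    (hT : T ≠ 0)
    (hL : ∀ A B : Matrix (Fin n) (Fin n) K,
      rowSpace A = rowSpace B → rowSpace (T A) = rowSpace (T B)) :
    ∃ X : Matrix (Fin n) (Fin n) K,
      ∀ A : Matrix (Fin n) (Fin n) K,
        T A = 0 ↔ ∃ Y : Matrix (Fin n) (Fin n) K, A = Y * X := by
  rcases Nat.eq_zero_or_pos n with rfl | hn
  · refine ⟨0, fun A => ⟨fun _ => ⟨0, ?_⟩, fun _ => ?_⟩⟩
    · ext i j; exact i.elim0
    · have : A = 0 := by ext i j; exact i.elim0
      rw [this, map_zero]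
  haveI : NeZero n := ⟨hn.ne'⟩
  -- kernel membership depends only on the row space
  have kc : ∀ A B : Matrix (Fin n) (Fin n) K,
      rowSpace A = rowSpace B → (T A = 0 ↔ T B = 0) := by
    intro A B h
    rw [← rowSpace_eq_bot, ← rowSpace_eq_bot, hL A B h]
  -- each row of a kernel element, placed as a single-row matrix, is in the kernel
  have hrow : ∀ B : Matrix (Fin n) (Fin n) K, T B = 0 → ∀ k : Fin n,
      T (rowMat (0 : Fin n) (B k)) = 0 := by
    intro B hB k
    by_cases hex : ∃ i : Fin n, i ≠ k
    · obtain ⟨i, hik⟩ := hex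
      have hu : IsUnit (Matrix.transvection i k (1 : K)) := by
        rw [Matrix.isUnit_iff_isUnit_det, Matrix.det_transvection_of_ne i k hik]
        exact isUnit_one
      have htv : T (Matrix.transvection i k (1 : K) * B) = 0 :=
        (kc _ B (rowSpace_unit_mul hu B)).mpr hB
      have hsplit : Matrix.transvection i k (1 : K) * B = B + rowMat i (B k) := by
        rw [Matrix.transvection, add_mul, Matrix.one_mul, stdBasisMatrix_mul_eq_rowMat]
      rw [hsplit, map_add, hB, zero_add] at htv
      exact (kc _ _ (by rw [rowSpace_rowMat, rowSpace_rowMat])).mpr htv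
    · push_neg at hex
      have hBk : rowMat (0 : Fin n) (B k) = B := by
        ext a b
        have ha : a = k := hex a
        have h0 : (0 : Fin n) = k := hex 0
        rw [rowMat_apply, ha, h0, if_pos rfl]
      rw [hBk]; exact hB
  -- the subspace of vectors whose single-row matrix is in the kernel
  set S : Submodule K (Fin n → K) := LinearMap.ker (T ∘ₗ rowMat (0 : Fin n)) with hS
  -- W : span of all rows of all kernel elements
  set W : Submodule K (Fin n → K) :=
    Submodule.span K {v | ∃ B : Matrix (Fin n) (Fin n) K, T B = 0 ∧ ∃ k, B k = v} with hW
  have hWS : W ≤ S := by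
    rw [hW, Submodule.span_le]
    rintro v ⟨B, hB, k, rfl⟩
    simpa [hS, LinearMap.mem_ker] using hrow B hB k
  have hker_iff : ∀ A : Matrix (Fin n) (Fin n) K, T A = 0 ↔ rowSpace A ≤ W := by
    intro A
    constructor
    · intro hA
      rw [rowSpace, Submodule.span_le]
      rintro _ ⟨i, rfl⟩
      exact Submodule.subset_span ⟨A, hA, i, rfl⟩
    · intro hA
      have hA' : A = ∑ k, rowMat k (A k) := by
        ext a b
        rw [Matrix.sum_apply]
        simp [rowMat_apply]
      rw [hA', map_sum]
      apply Finset.sum_eq_zero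
      intro k _
      have hk : A k ∈ S := hWS (hA (Submodule.subset_span ⟨k, rfl⟩))
      have hk0 : T (rowMat (0 : Fin n) (A k)) = 0 := by
        simpa [hS, LinearMap.mem_ker] using hk
      exact (kc _ _ (by rw [rowSpace_rowMat, rowSpace_rowMat])).mpr hk0
  -- construct X whose rows span W
  have hfin : Module.finrank K W ≤ n := by
    have := Submodule.finrank_le W
    simpa using this
  set m := Module.finrank K ↥W with hm
  let b : Module.Basis (Fin m) K ↥W := Module.finBasis K ↥W
  set X : Matrix (Fin n) (Fin n) K :=
    Matrix.of (fun i b' => if h : (i : ℕ) < m then (b ⟨i, h⟩ : Fin n → K) b' else 0) with hXdef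
  have hXrow : ∀ (i : Fin n) (h : (i : ℕ) < m), X i = (b ⟨i, h⟩ : Fin n → K) := by
    intro i h; ext j; simp [hXdef, h]
  have hXrow0 : ∀ (i : Fin n), ¬ (i : ℕ) < m → X i = 0 := by
    intro i h; ext j; simp [hXdef, h]
  have hX : rowSpace X = W := by
    apply le_antisymm
    · rw [rowSpace, Submodule.span_le]
      rintro _ ⟨i, rfl⟩
      by_cases h : (i : ℕ) < m
      · rw [hXrow i h]; exact (b ⟨i, h⟩ : ↥W).2
      · rw [hXrow0 i h]; exact Submodule.zero_mem _
    · intro w hw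
      have hw' : (⟨w, hw⟩ : ↥W) ∈ Submodule.span K (Set.range b) := by
        rw [b.span_eq]; trivial
      have hw'' : w ∈ Submodule.map W.subtype (Submodule.span K (Set.range b)) :=
        ⟨⟨w, hw⟩, hw', rfl⟩
      rw [Submodule.map_span] at hw''
      refine Submodule.span_le.mpr ?_ hw''
      rintro _ ⟨_, ⟨j, rfl⟩, rfl⟩
      have hj : ((⟨(j : ℕ), lt_of_lt_of_le j.isLt hfin⟩ : Fin n) : ℕ) < m := j.isLt
      have : W.subtype (b j) = X ⟨(j : ℕ), lt_of_lt_of_le j.isLt hfin⟩ := by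
        rw [hXrow _ hj]; rfl
      rw [this]
      exact Submodule.subset_span ⟨_, rfl⟩
  refine ⟨X, fun A => ?_⟩
  rw [hker_iff A, ← hX]
  constructor
  · intro h
    have hmem : ∀ i : Fin n, A i ∈ Submodule.span K (Set.range X) :=
      fun i => h (Submodule.subset_span ⟨i, rfl⟩)
    have hc : ∀ i : Fin n, ∃ c : Fin n → K, ∑ k, c k • X k = A i := by
      intro i
      exact (Submodule.mem_span_range_iff_exists_fun K).mp (hmem i)
    choose Y hY using hc
    refine ⟨Matrix.of Y, ?_⟩
    ext i j
    have := congrFun (hY i) j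
    simp only [Finset.sum_apply, Pi.smul_apply, smul_eq_mul] at this
    rw [Matrix.mul_apply]
    exact this.symm
  · rintro ⟨Y, rfl⟩
    exact rowSpace_mul_le Y X
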